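/- (Averaging two coordinates strictly increases the entropy) Let n ≥ 2, let q = (q_1,…,q_n) ∈ [0,1]^n, and let l ≠ m be indices with q_l ≠ q_m. Let q̄ be the vector obtained from q by replacing both q_l and q_m with (q_l + q_m)/2. Then H(Z_q) < H(Z_{q̄}). Consequently, the function H(Z_p) restricted to the line {q + t(e_l − e_m) : t ∈ ℝ, q + t(e_l − e_m) ∈ [0,1]^n} has a unique maximum, attained where coordinates l and m are equal. -/

import Mathlib

open Finset

/-- `b(k,p)`: the Poisson–binomial probability mass function. -/
noncomputable def pbin (n : ℕ) (p : Fin n → ℝ) (k : ℤ) : ℝ :=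
  ∑ A ∈ Finset.univ.powerset.filter (fun A : Finset (Fin n) => (A.card : ℤ) = k),
    (∏ i ∈ A, p i) * ∏ j ∈ Aᶜ, (1 - p j)

/-- Shannon entropy (base 2) of the Poisson–binomial distribution. -/
noncomputable def pbinEnt (n : ℕ) (p : Fin n → ℝ) : ℝ :=
  -∑ k ∈ Finset.range (n + 1), pbin n p k * Real.logb 2 (pbin n p k)

noncomputable def W (n : ℕ) (p : Fin n → ℝ) (S : Finset (Fin n)) (k : ℤ) : ℝ :=
  ∑ A ∈ S.powerset.filter (fun A => (A.card : ℤ) = k),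
    (∏ i ∈ A, p i) * ∏ j ∈ S \ A, (1 - p j)


lemma W_univ (n : ℕ) (p : Fin n → ℝ) (k : ℤ) : W n p Finset.univ k = pbin n p k := by
  unfold W pbin
  refine Finset.sum_congr rfl fun A hA => ?_
  rw [Finset.compl_eq_univ_sdiff]

lemma W_congr (n : ℕ) (p r : Fin n → ℝ) (S : Finset (Fin n))
    (h : ∀ i ∈ S, p i = r i) (k : ℤ) : W n p S k = W n r S k := by
  unfold W
  refine Finset.sum_congr rfl fun A hA => ?_
  simp only [Finset.mem_filter, Finset.mem_powerset] at hA
  rw [Finset.prod_congr rfl fun i hi => h i (hA.1 hi)]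
  rw [Finset.prod_congr rfl fun j hj => show (1 - p j) = (1 - r j) by
    rw [h j (Finset.sdiff_subset hj)]]

lemma W_empty (n : ℕ) (p : Fin n → ℝ) (k : ℤ) :
    W n p ∅ k = if k = 0 then 1 else 0 := by
  unfold W
  simp only [Finset.powerset_empty]
  by_cases hk : k = 0 <;> simp [hk, Finset.filter_singleton, eq_comm]

lemma W_insert (n : ℕ) (p : Fin n → ℝ) {a : Fin n} {S : Finset (Fin n)} (ha : a ∉ S) (k : ℤ) :
    W n p (insert a S) k = (1 - p a) * W n p S k + p a * W n p S (k - 1) := by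
  unfold W
  simp only [Finset.sum_filter]
  have hps := Finset.sum_powerset_insert (β := ℝ) ha
    (fun A => if ((A.card : ℤ) = k) then (∏ i ∈ A, p i) * ∏ j ∈ insert a S \ A, (1 - p j) else 0)
  rw [hps]
  rw [Finset.mul_sum]
  rw [Finset.mul_sum]
  simp only [← Finset.sum_add_distrib]
  refine Finset.sum_congr rfl fun A hA => ?_
  rw [Finset.mem_powerset] at hA
  have haA : a ∉ A := fun h => ha (hA h)
  have h1 : insert a S \ A = insert a (S \ A) := by
    rw [Finset.insert_sdiff_of_notMem _ haA]
  have h2 : insert a S \ insert a A = S \ A := by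
    rw [Finset.insert_sdiff_insert]
    rw [Finset.sdiff_insert, Finset.erase_eq_of_notMem]
    exact fun h => ha (Finset.mem_sdiff.mp h).1
  have h3 : ((insert a A).card : ℤ) = (A.card : ℤ) + 1 := by
    rw [Finset.card_insert_of_notMem haA]; push_cast; ring
  have haSA : a ∉ S \ A := fun h => ha (Finset.mem_sdiff.mp h).1
  rw [h1, h2, Finset.prod_insert haSA, Finset.prod_insert haA, h3]
  by_cases hk : (A.card : ℤ) = k
  · rw [if_pos hk, if_pos hk, if_neg (show ¬((A.card : ℤ) + 1 = k) by omega),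
      if_neg (show ¬((A.card : ℤ) = k - 1) by omega)]
    ring
  · rw [if_neg hk, if_neg hk]
    by_cases hk' : (A.card : ℤ) + 1 = k
    · rw [if_pos hk', if_pos (show (A.card : ℤ) = k - 1 by omega)]; ring
    · rw [if_neg hk', if_neg (show ¬((A.card : ℤ) = k - 1) by omega)]; ring

lemma W_zero (n : ℕ) (p : Fin n → ℝ) (S : Finset (Fin n)) (k : ℤ)
    (hk : k < 0 ∨ (S.card : ℤ) < k) : W n p S k = 0 := by
  unfold W
  apply Finset.sum_eq_zero
  intro A hA
  simp only [Finset.mem_filter, Finset.mem_powerset] at hA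
  exfalso
  have := Finset.card_le_card hA.1
  omega

lemma W_sum (n : ℕ) (p : Fin n → ℝ) (S : Finset (Fin n)) (m : ℕ) (hm : S.card ≤ m) :
    ∑ k ∈ Finset.range (m + 1), W n p S (k : ℤ) = 1 := by
  unfold W
  rw [← Finset.sum_image (f := fun j : ℤ => ∑ A ∈ S.powerset.filter (fun A => (A.card : ℤ) = j),
      (∏ i ∈ A, p i) * ∏ x ∈ S \ A, (1 - p x))
    (g := fun k : ℕ => (k : ℤ)) (s := Finset.range (m+1))
    (fun x _ y _ h => Nat.cast_injective h)]
  rw [Finset.sum_fiberwise_of_maps_to (g := fun A : Finset (Fin n) => ((A.card : ℤ)))]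
  · rw [← Finset.prod_add]
    simp
  · intro A hA
    rw [Finset.mem_powerset] at hA
    have := Finset.card_le_card hA
    simp only [Finset.mem_image, Finset.mem_range]
    exact ⟨A.card, by omega, rfl⟩

def LC (f : ℤ → ℝ) : Prop :=
  (∀ k, 0 ≤ f k) ∧ ∀ k l : ℤ, k ≤ l → f (k - 1) * f (l + 1) ≤ f k * f l

lemma LC_step {f : ℤ → ℝ} (hf : LC f) {p : ℝ} (hp0 : 0 ≤ p) (hp1 : p ≤ 1) :
    LC (fun k => (1 - p) * f k + p * f (k - 1)) := by
  obtain ⟨hpos, hlc⟩ := hf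
  constructor
  · intro k
    have h1 := hpos k; have h2 := hpos (k - 1)
    dsimp only
    nlinarith
  · intro k l hkl
    simp only
    have h1 : f (k - 1) * f (l + 1) ≤ f k * f l := hlc k l hkl
    have h2 : f (k - 1 - 1) * f (l - 1 + 1) ≤ f (k - 1) * f (l - 1) := by
      have := hlc (k - 1) (l - 1) (by omega)
      linarith
    have h3 : f (k - 2) * f (l + 1) ≤ f k * f (l - 1) := by
      rcases eq_or_lt_of_le hkl with h | h
      · subst h
        have := hlc (k - 1) k (by omega)
        calc f (k - 2) * f (k + 1) = f (k - 1 - 1) * f (k + 1) := by ring_nf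
          _ ≤ f (k - 1) * f k := this
          _ = f k * f (k - 1) := by ring
      · have ha := hlc k (l - 1) (by omega)
        have hb := hlc (k - 1) l (by omega)
        have : f (k - 1 - 1) * f (l + 1) ≤ f (k - 1) * f l := hb
        have : f (k - 1) * f (l - 1 + 1) ≤ f k * f (l - 1) := ha
        have e : (l - 1 + 1 : ℤ) = l := by ring
        rw [e] at ha
        have e2 : (k - 1 - 1 : ℤ) = k - 2 := by ring
        rw [e2] at hb
        calc f (k - 2) * f (l + 1) ≤ f (k - 1) * f l := hb
          _ ≤ f k * f (l - 1) := ha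
    have e2 : (k - 1 - 1 : ℤ) = k - 2 := by ring
    have e3 : (l - 1 + 1 : ℤ) = l := by ring
    rw [e2, e3] at h2
    have hq := hpos; have q1 := hq (k-1); have q2 := hq (l+1); have q3 := hq k
    have q4 := hq l; have q5 := hq (k-2); have q6 := hq (l-1)
    rw [show (k - 1 - 1 : ℤ) = k - 2 from by ring, show (l + 1 - 1 : ℤ) = l from by ring]
    nlinarith [mul_le_mul_of_nonneg_left h1 (sq_nonneg (1 - p)),
      mul_le_mul_of_nonneg_left h2 (sq_nonneg p),
      mul_le_mul_of_nonneg_left h3 (mul_nonneg hp0 (by linarith : (0:ℝ) ≤ 1 - p))]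

lemma LC_W (n : ℕ) (p : Fin n → ℝ) (hp : ∀ i, p i ∈ Set.Icc (0:ℝ) 1)
    (S : Finset (Fin n)) : LC (W n p S) := by
  induction S using Finset.induction_on with
  | empty =>
    constructor
    · intro k; rw [W_empty]; split <;> norm_num
    · intro k l hkl
      have h : W n p ∅ (k - 1) * W n p ∅ (l + 1) = 0 := by
        rw [W_empty, W_empty]
        by_cases h1 : (k - 1 : ℤ) = 0
        · have h2 : ¬((l + 1 : ℤ) = 0) := by omega
          simp [h2]
        · simp [h1]
      rw [h]
      apply mul_nonneg <;> (rw [W_empty]; split <;> norm_num)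
  | @insert a S ha ih =>
    have heq : W n p (insert a S) = fun k => (1 - p a) * W n p S k + p a * W n p S (k - 1) := by
      funext k; exact W_insert n p ha k
    rw [heq]
    exact LC_step ih (hp a).1 (hp a).2

lemma pbin_decomp (n : ℕ) (p : Fin n → ℝ) {l m : Fin n} (hlm : l ≠ m) (k : ℤ) :
    pbin n p k = (1 - p l) * (1 - p m) * W n p ({l, m}ᶜ) k
      + (p l * (1 - p m) + p m * (1 - p l)) * W n p ({l, m}ᶜ) (k - 1)
      + p l * p m * W n p ({l, m}ᶜ) (k - 2) := by
  have hm : m ∉ ({l, m}ᶜ : Finset (Fin n)) := by simp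
  have hl : l ∉ insert m ({l, m}ᶜ : Finset (Fin n)) := by
    simp [hlm]
  have h1 : insert l (insert m ({l, m}ᶜ : Finset (Fin n))) = Finset.univ := by
    ext x
    simp only [Finset.mem_insert, Finset.mem_compl, Finset.mem_univ, iff_true]
    by_cases hx : x = l
    · left; exact hx
    · by_cases hy : x = m
      · right; left; exact hy
      · right; right; simp [hx, hy]
  rw [← W_univ, ← h1, W_insert n p hl, W_insert n p hm, W_insert n p hm,
    show (k - 1 - 1 : ℤ) = k - 2 from by ring]
  ring

lemma xlogx_ge {u v : ℝ} (hu : 0 < u) (hv : 0 ≤ v) :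
    (Real.log u + 1) * (v - u) ≤ v * Real.log v - u * Real.log u := by
  rcases eq_or_lt_of_le hv with h | h
  · rw [← h]; simp; nlinarith [hu]
  · have hlog := Real.log_le_sub_one_of_pos (show 0 < u / v by positivity)
    rw [Real.log_div (ne_of_gt hu) (ne_of_gt h)] at hlog
    have h2 := mul_le_mul_of_nonneg_left hlog (le_of_lt h)
    have h3 : v * (u / v - 1) = u - v := by field_simp
    rw [mul_sub] at h2
    nlinarith [h2, h3]

lemma xlogx_gt {u v : ℝ} (hu : 0 < u) (hv : 0 ≤ v) (hne : v ≠ u) :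
    (Real.log u + 1) * (v - u) < v * Real.log v - u * Real.log u := by
  rcases eq_or_lt_of_le hv with h | h
  · rw [← h]; simp; nlinarith [hu]
  · have huv : u / v ≠ 1 := by
      intro hh
      rw [div_eq_one_iff_eq (ne_of_gt h)] at hh
      exact hne hh.symm
    have hlog := Real.log_lt_sub_one_of_pos (show 0 < u / v by positivity) huv
    rw [Real.log_div (ne_of_gt hu) (ne_of_gt h)] at hlog
    have h2 := (mul_lt_mul_iff_right₀ h).mpr hlog
    have h3 : v * (u / v - 1) = u - v := by field_simp
    rw [mul_sub] at h2
    nlinarith [h2, h3]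

lemma shift_sum (f L : ℤ → ℝ) (N : ℕ) (h0 : f (-1) = 0) (hn : f (N : ℤ) = 0) :
    ∑ k ∈ Finset.range (N + 1), f ((k : ℤ) - 1) * L k
      = ∑ k ∈ Finset.range (N + 1), f (k : ℤ) * L ((k : ℤ) + 1) := by
  rw [Finset.sum_range_succ' (fun k : ℕ => f ((k : ℤ) - 1) * L (k : ℤ)) N,
    Finset.sum_range_succ (fun k : ℕ => f (k : ℤ) * L ((k : ℤ) + 1)) N]
  simp only [Nat.cast_zero, zero_sub, h0, hn, zero_mul, add_zero]
  refine Finset.sum_congr rfl fun i _ => ?_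
  push_cast
  rw [show ((i : ℤ) + 1 - 1) = (i : ℤ) from by ring]

lemma core (n : ℕ) (f : ℤ → ℝ) (hfpos : ∀ k, 0 ≤ f k)
    (hf0 : ∀ k : ℤ, k < 0 → f k = 0) (hfN : ∀ k : ℤ, (n : ℤ) - 2 < k → f k = 0)
    (hfsum : ∑ k ∈ Finset.range (n + 1), f (k : ℤ) = 1)
    (a b c : ℝ) (ha0 : 0 ≤ a) (ha1 : a ≤ 1) (hb0 : 0 ≤ b) (hb1 : b ≤ 1)
    (hc : a + b = c + c) (hne : a ≠ b)
    (u v : ℤ → ℝ)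
    (hu : ∀ k, u k = (1 - c)^2 * f k + (2 * c * (1 - c)) * f (k - 1) + c^2 * f (k - 2))
    (hv : ∀ k, v k = (1 - a) * (1 - b) * f k + (a * (1 - b) + b * (1 - a)) * f (k - 1)
      + (a * b) * f (k - 2))
    (hulc : ∀ k j : ℤ, k ≤ j → u (k - 1) * u (j + 1) ≤ u k * u j)
    (hvpos : ∀ k, 0 ≤ v k) :
    -∑ k ∈ Finset.range (n + 1), v (k : ℤ) * Real.log (v (k : ℤ))
      < -∑ k ∈ Finset.range (n + 1), u (k : ℤ) * Real.log (u (k : ℤ)) := by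
  -- basic bounds on c
  have hc0 : 0 < c := by
    by_contra h
    push_neg at h
    have hA : a = 0 := by linarith
    have hB : b = 0 := by linarith
    exact hne (hA.trans hB.symm)
  have hc1 : c < 1 := by
    by_contra h
    push_neg at h
    have hA : a = 1 := by linarith
    have hB : b = 1 := by linarith
    exact hne (hA.trans hB.symm)
  set δ : ℝ := c^2 - a * b with hδdef
  have hδ : 0 < δ := by
    have hδeq : δ = ((a - b) / 2)^2 := by
      rw [hδdef, show c = (a + b) / 2 from by linarith]; ring
    have hab : (a - b) / 2 ≠ 0 := fun h => hne (by linarith [h]; )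
    rw [hδeq]
    exact lt_of_le_of_ne (sq_nonneg _) (Ne.symm (pow_ne_zero 2 hab))
  have hvu : ∀ k, v k = u k - δ * (f k - 2 * f (k - 1) + f (k - 2)) := by
    intro k
    rw [hv k, hu k, hδdef, show c = (a + b) / 2 from by linarith]
    ring
  have hupos : ∀ k, 0 ≤ u k := by
    intro k
    rw [hu k]
    have h1 : (0:ℝ) ≤ (1 - c)^2 * f k := mul_nonneg (sq_nonneg _) (hfpos _)
    have h2 : (0:ℝ) ≤ 2 * c * (1 - c) * f (k - 1) :=
      mul_nonneg (by nlinarith) (hfpos _)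
    have h3 : (0:ℝ) ≤ c^2 * f (k - 2) := mul_nonneg (sq_nonneg _) (hfpos _)
    linarith
  have hcoef1 : (0 : ℝ) < (1 - c)^2 := pow_pos (by linarith) 2
  have hcoef2 : (0 : ℝ) < 2 * c * (1 - c) := by nlinarith
  have hcoef3 : (0 : ℝ) < c^2 := by positivity
  have hu0 : ∀ k, u k = 0 → f k = 0 ∧ f (k - 1) = 0 ∧ f (k - 2) = 0 := by
    intro k hk
    rw [hu k] at hk
    have t1 : 0 ≤ (1 - c)^2 * f k := mul_nonneg (le_of_lt hcoef1) (hfpos _)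
    have t2 : 0 ≤ (2 * c * (1 - c)) * f (k - 1) := mul_nonneg (le_of_lt hcoef2) (hfpos _)
    have t3 : 0 ≤ c^2 * f (k - 2) := mul_nonneg (le_of_lt hcoef3) (hfpos _)
    refine ⟨?_, ?_, ?_⟩ <;> nlinarith [hfpos k, hfpos (k-1), hfpos (k-2)]
  -- the minimal support point of f
  have hex : ∃ k : ℕ, f (k : ℤ) ≠ 0 := by
    by_contra h
    push_neg at h
    rw [Finset.sum_eq_zero (fun k _ => h k)] at hfsum
    norm_num at hfsum
  set k0 := Nat.find hex with hk0def
  have hk0 : f (k0 : ℤ) ≠ 0 := Nat.find_spec hex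
  have hfk0 : 0 < f (k0 : ℤ) := lt_of_le_of_ne (hfpos _) (Ne.symm hk0)
  have hk0le : (k0 : ℤ) ≤ (n : ℤ) - 2 := by
    by_contra h
    push_neg at h
    exact hk0 (hfN _ h)
  have hk0mem : k0 ∈ Finset.range (n + 1) := by
    rw [Finset.mem_range]; omega
  have hfm1 : f ((k0 : ℤ) - 1) = 0 := by
    rcases Nat.eq_zero_or_pos k0 with h | h
    · apply hf0; omega
    · have := Nat.find_min hex (show k0 - 1 < k0 by omega)
      push_neg at this
      rw [show ((k0 : ℤ) - 1) = ((k0 - 1 : ℕ) : ℤ) from by push_cast [h]; ring]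
      simpa using this
  have hfm2 : f ((k0 : ℤ) - 2) = 0 := by
    rcases Nat.lt_or_ge k0 2 with h | h
    · apply hf0; omega
    · have := Nat.find_min hex (show k0 - 2 < k0 by omega)
      push_neg at this
      rw [show ((k0 : ℤ) - 2) = ((k0 - 2 : ℕ) : ℤ) from by push_cast [h]; ring]
      simpa using this
  have huk0 : 0 < u (k0 : ℤ) := by
    rw [hu _]
    have t2 : 0 ≤ (2 * c * (1 - c)) * f ((k0 : ℤ) - 1) := mul_nonneg (le_of_lt hcoef2) (hfpos _)
    have t3 : 0 ≤ c^2 * f ((k0 : ℤ) - 2) := mul_nonneg (le_of_lt hcoef3) (hfpos _)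
    nlinarith [mul_pos hcoef1 hfk0]
  have hvne : v (k0 : ℤ) ≠ u (k0 : ℤ) := by
    rw [hvu _, hfm1, hfm2]
    intro h
    have : δ * f (k0 : ℤ) = 0 := by linarith
    exact (ne_of_gt (mul_pos hδ hfk0)) this
  -- the pointwise gradient inequality
  have main_le : ∀ k ∈ Finset.range (n + 1),
      (Real.log (u (k : ℤ)) + 1) * (v (k : ℤ) - u (k : ℤ))
        ≤ v (k : ℤ) * Real.log (v (k : ℤ)) - u (k : ℤ) * Real.log (u (k : ℤ)) := by
    intro k _
    by_cases hk : u (k : ℤ) = 0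
    · obtain ⟨e1, e2, e3⟩ := hu0 _ hk
      have hvk : v (k : ℤ) = 0 := by rw [hvu _, e1, e2, e3, hk]; ring
      rw [hk, hvk]; simp
    · exact xlogx_ge (lt_of_le_of_ne (hupos _) (Ne.symm hk)) (hvpos _)
  have main_lt : (Real.log (u (k0 : ℤ)) + 1) * (v (k0 : ℤ) - u (k0 : ℤ))
      < v (k0 : ℤ) * Real.log (v (k0 : ℤ)) - u (k0 : ℤ) * Real.log (u (k0 : ℤ)) :=
    xlogx_gt huk0 (hvpos _) hvne
  have hsum_lt : ∑ k ∈ Finset.range (n + 1),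
      (Real.log (u (k : ℤ)) + 1) * (v (k : ℤ) - u (k : ℤ))
      < ∑ k ∈ Finset.range (n + 1),
        (v (k : ℤ) * Real.log (v (k : ℤ)) - u (k : ℤ) * Real.log (u (k : ℤ))) :=
    Finset.sum_lt_sum main_le ⟨k0, hk0mem, main_lt⟩
  -- the linear term is nonnegative
  have hfn1 : f ((n : ℤ)) = 0 := hfN _ (by omega)
  have hfn2 : f ((n : ℤ) - 1) = 0 := hfN _ (by omega)
  have expand : ∀ L : ℤ → ℝ,
      ∑ k ∈ Finset.range (n + 1), (f (k : ℤ) - 2 * f ((k : ℤ) - 1) + f ((k : ℤ) - 2)) * L (k : ℤ)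
        = ∑ k ∈ Finset.range (n + 1),
          f (k : ℤ) * (L (k : ℤ) - 2 * L ((k : ℤ) + 1) + L ((k : ℤ) + 2)) := by
    intro L
    have e1 : ∑ k ∈ Finset.range (n + 1), f ((k : ℤ) - 1) * L (k : ℤ)
        = ∑ k ∈ Finset.range (n + 1), f (k : ℤ) * L ((k : ℤ) + 1) :=
      shift_sum f L n (hf0 _ (by omega)) hfn1
    have e2 : ∑ k ∈ Finset.range (n + 1), f ((k : ℤ) - 2) * L (k : ℤ)
        = ∑ k ∈ Finset.range (n + 1), f (k : ℤ) * L ((k : ℤ) + 2) := by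
      have s1 : ∑ k ∈ Finset.range (n + 1), (fun j => f (j - 1)) ((k : ℤ) - 1) * L (k : ℤ)
          = ∑ k ∈ Finset.range (n + 1), (fun j => f (j - 1)) (k : ℤ) * L ((k : ℤ) + 1) :=
        shift_sum (fun j => f (j - 1)) L n (by apply hf0; omega)
          (by exact hfN _ (by omega))
      simp only [show ∀ k : ℤ, k - 1 - 1 = k - 2 from fun k => by ring] at s1
      rw [s1]
      have s2 : ∑ k ∈ Finset.range (n + 1), f ((k : ℤ) - 1) * (fun j => L (j + 1)) (k : ℤ)
          = ∑ k ∈ Finset.range (n + 1), f (k : ℤ) * (fun j => L (j + 1)) ((k : ℤ) + 1) :=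
        shift_sum f (fun j => L (j + 1)) n (hf0 _ (by omega)) hfn1
      simp only at s2
      rw [s2]
      refine Finset.sum_congr rfl fun i _ => ?_
      rw [show ((i : ℤ) + 1 + 1) = (i : ℤ) + 2 from by ring]
    have h1 : ∑ k ∈ Finset.range (n + 1),
        (f (k : ℤ) - 2 * f ((k : ℤ) - 1) + f ((k : ℤ) - 2)) * L (k : ℤ)
        = ∑ k ∈ Finset.range (n + 1), f (k : ℤ) * L (k : ℤ)
          - 2 * ∑ k ∈ Finset.range (n + 1), f ((k : ℤ) - 1) * L (k : ℤ)
          + ∑ k ∈ Finset.range (n + 1), f ((k : ℤ) - 2) * L (k : ℤ) := by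
      rw [Finset.mul_sum, ← Finset.sum_sub_distrib, ← Finset.sum_add_distrib]
      exact Finset.sum_congr rfl fun i _ => by ring
    have h2 : ∑ k ∈ Finset.range (n + 1),
        f (k : ℤ) * (L (k : ℤ) - 2 * L ((k : ℤ) + 1) + L ((k : ℤ) + 2))
        = ∑ k ∈ Finset.range (n + 1), f (k : ℤ) * L (k : ℤ)
          - 2 * ∑ k ∈ Finset.range (n + 1), f (k : ℤ) * L ((k : ℤ) + 1)
          + ∑ k ∈ Finset.range (n + 1), f (k : ℤ) * L ((k : ℤ) + 2) := by
      rw [Finset.mul_sum, ← Finset.sum_sub_distrib, ← Finset.sum_add_distrib]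
      exact Finset.sum_congr rfl fun i _ => by ring
    rw [h1, e1, e2, h2]
  have hlogterm : ∑ k ∈ Finset.range (n + 1),
      (f (k : ℤ) - 2 * f ((k : ℤ) - 1) + f ((k : ℤ) - 2)) * Real.log (u (k : ℤ)) ≤ 0 := by
    rw [expand (fun j => Real.log (u j))]
    apply Finset.sum_nonpos
    intro k _
    rcases eq_or_lt_of_le (hfpos (k : ℤ)) with h | h
    · rw [← h]; simp
    · have hu1 : 0 < u (k : ℤ) := by
        rw [hu _]
        linarith [mul_pos hcoef1 h, mul_nonneg (le_of_lt hcoef2) (hfpos ((k : ℤ) - 1)),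
          mul_nonneg (le_of_lt hcoef3) (hfpos ((k : ℤ) - 2))]
      have hu2 : 0 < u ((k : ℤ) + 1) := by
        rw [hu _, show ((k : ℤ) + 1 - 1) = (k : ℤ) from by ring]
        linarith [mul_pos hcoef2 h, mul_nonneg (le_of_lt hcoef1) (hfpos ((k : ℤ) + 1)),
          mul_nonneg (le_of_lt hcoef3) (hfpos ((k : ℤ) + 1 - 2))]
      have hu3 : 0 < u ((k : ℤ) + 2) := by
        rw [hu _, show ((k : ℤ) + 2 - 2) = (k : ℤ) from by ring]
        linarith [mul_pos hcoef3 h, mul_nonneg (le_of_lt hcoef1) (hfpos ((k : ℤ) + 2)),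
          mul_nonneg (le_of_lt hcoef2) (hfpos ((k : ℤ) + 2 - 1))]
      have hmul : u (k : ℤ) * u ((k : ℤ) + 2) ≤ u ((k : ℤ) + 1) * u ((k : ℤ) + 1) := by
        have h5 := hulc ((k : ℤ) + 1) ((k : ℤ) + 1) le_rfl
        rw [show ((k : ℤ) + 1 - 1) = (k : ℤ) from by ring,
          show ((k : ℤ) + 1 + 1) = (k : ℤ) + 2 from by ring] at h5
        exact h5
      have hlog : Real.log (u (k : ℤ)) + Real.log (u ((k : ℤ) + 2))
          ≤ 2 * Real.log (u ((k : ℤ) + 1)) := by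
        have hl := Real.log_le_log (mul_pos hu1 hu3) hmul
        rw [Real.log_mul (ne_of_gt hu1) (ne_of_gt hu3),
          Real.log_mul (ne_of_gt hu2) (ne_of_gt hu2)] at hl
        linarith
      have hnp : Real.log (u (k : ℤ)) - 2 * Real.log (u ((k : ℤ) + 1))
          + Real.log (u ((k : ℤ) + 2)) ≤ 0 := by linarith
      exact mul_nonpos_of_nonneg_of_nonpos (le_of_lt h) hnp
  have hα0 : ∑ k ∈ Finset.range (n + 1),
      (f (k : ℤ) - 2 * f ((k : ℤ) - 1) + f ((k : ℤ) - 2)) * (1 : ℝ) = 0 := by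
    rw [expand (fun _ => (1 : ℝ))]
    apply Finset.sum_eq_zero; intro k _; ring
  have hRHS : 0 ≤ ∑ k ∈ Finset.range (n + 1),
      (Real.log (u (k : ℤ)) + 1) * (v (k : ℤ) - u (k : ℤ)) := by
    have e : ∀ k ∈ Finset.range (n + 1), (Real.log (u (k : ℤ)) + 1) * (v (k : ℤ) - u (k : ℤ))
        = -δ * ((f (k : ℤ) - 2 * f ((k : ℤ) - 1) + f ((k : ℤ) - 2)) * Real.log (u (k : ℤ)))
          + -δ * ((f (k : ℤ) - 2 * f ((k : ℤ) - 1) + f ((k : ℤ) - 2)) * (1 : ℝ)) := by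
      intro k _; rw [hvu (k : ℤ)]; ring
    rw [Finset.sum_congr rfl e, Finset.sum_add_distrib, ← Finset.mul_sum, ← Finset.mul_sum, hα0]
    nlinarith [hδ, hlogterm]
  have hfin := lt_of_le_of_lt hRHS hsum_lt
  rw [Finset.sum_sub_distrib] at hfin
  linarith


lemma pbinEnt_eq (n : ℕ) (p : Fin n → ℝ) :
    pbinEnt n p = (-∑ k ∈ Finset.range (n + 1),
      pbin n p k * Real.log (pbin n p k)) / Real.log 2 := by
  unfold pbinEnt Real.logb
  rw [neg_div, Finset.sum_div]
  congr 1
  exact Finset.sum_congr rfl fun k _ => by rw [mul_div_assoc]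

lemma ent_lt (n : ℕ) (hn : 2 ≤ n) (p r : Fin n → ℝ) (l m : Fin n) (hlm : l ≠ m)
    (hp : ∀ i, p i ∈ Set.Icc (0:ℝ) 1) (hr : ∀ i, r i ∈ Set.Icc (0:ℝ) 1)
    (hagree : ∀ i, i ≠ l → i ≠ m → p i = r i)
    (hsum : p l + p m = r l + r m) (hrr : r l = r m) (hne : p l ≠ p m) :
    pbinEnt n p < pbinEnt n r := by
  have hSmem : ∀ i, i ∈ ({l, m}ᶜ : Finset (Fin n)) ↔ (i ≠ l ∧ i ≠ m) := by
    intro i; simp [Finset.mem_compl]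
  have hcard : (({l, m}ᶜ : Finset (Fin n)).card : ℤ) = (n : ℤ) - 2 := by
    rw [Finset.card_compl, Finset.card_insert_of_notMem (by simp [hlm]),
      Finset.card_singleton]
    simp only [Finset.card_univ, Fintype.card_fin]
    omega
  set f : ℤ → ℝ := fun k => W n r ({l, m}ᶜ) k with hfdef
  have hfW : ∀ k, W n p ({l, m}ᶜ) k = f k := by
    intro k
    exact W_congr n p r _ (fun i hi => hagree i ((hSmem i).1 hi).1 ((hSmem i).1 hi).2) k
  have hLC : LC (W n r Finset.univ) := LC_W n r hr Finset.univ
  have hLCp : LC (W n p Finset.univ) := LC_W n p hp Finset.univ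
  have hLCf : LC f := LC_W n r hr _
  have key := core n f hLCf.1
    (fun k hk => W_zero n r _ k (Or.inl hk))
    (fun k hk => W_zero n r _ k (Or.inr (by omega)))
    (W_sum n r _ n (by have := hcard; omega))
    (p l) (p m) (r l) (hp l).1 (hp l).2 (hp m).1 (hp m).2
    (by rw [hsum]; rw [hrr])
    hne
    (pbin n r) (pbin n p)
    (fun k => by
      rw [pbin_decomp n r hlm k, hrr]
      ring)
    (fun k => by
      rw [pbin_decomp n p hlm k, hfW, hfW, hfW])
    (fun k j hkj => by
      rw [← W_univ, ← W_univ, ← W_univ, ← W_univ]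
      exact hLC.2 k j hkj)
    (fun k => by rw [← W_univ]; exact hLCp.1 k)
  rw [pbinEnt_eq, pbinEnt_eq]
  have hlog2 : 0 < Real.log 2 := Real.log_pos (by norm_num)
  rw [div_lt_div_iff_of_pos_right hlog2]
  exact key

/-- Averaging two (distinct) coordinates strictly increases the entropy;
consequently the entropy restricted to the line `q + t·(e_l − e_m)` inside the
cube has a unique maximum, attained where coordinates `l` and `m` are equal. -/
theorem entropy_lt_of_average_two_coords (n : ℕ) (hn : 2 ≤ n) (q : Fin n → ℝ)
    (hq : ∀ i, q i ∈ Set.Icc (0 : ℝ) 1) (l m : Fin n) (hlm : l ≠ m)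
    (hne : q l ≠ q m)
    (qbar : Fin n → ℝ)
    (hqbar : qbar = Function.update (Function.update q l ((q l + q m) / 2)) m
      ((q l + q m) / 2))
    (u : Fin n → ℝ)
    (hu : u = fun i => if i = l then 1 else if i = m then -1 else 0) :
    pbinEnt n q < pbinEnt n qbar ∧
      ∀ t : ℝ, (∀ i, q i + t * u i ∈ Set.Icc (0 : ℝ) 1) →
        (fun i => q i + t * u i) ≠ qbar →
        pbinEnt n (fun i => q i + t * u i) < pbinEnt n qbar := by
  subst hqbar hu
  have hbl : Function.update (Function.update q l ((q l + q m) / 2)) m ((q l + q m) / 2) l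
      = (q l + q m) / 2 := by
    rw [Function.update_of_ne hlm, Function.update_self]
  have hbm : Function.update (Function.update q l ((q l + q m) / 2)) m ((q l + q m) / 2) m
      = (q l + q m) / 2 := Function.update_self _ _ _
  have hbo : ∀ i, i ≠ l → i ≠ m →
      Function.update (Function.update q l ((q l + q m) / 2)) m ((q l + q m) / 2) i = q i := by
    intro i h1 h2
    rw [Function.update_of_ne h2, Function.update_of_ne h1]
  have hqbar_mem : ∀ i,
      Function.update (Function.update q l ((q l + q m) / 2)) m ((q l + q m) / 2) i
        ∈ Set.Icc (0 : ℝ) 1 := by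
    intro i
    obtain ⟨h1, h2⟩ := hq l
    obtain ⟨h3, h4⟩ := hq m
    by_cases hi : i = m
    · subst hi; rw [hbm]; constructor <;> [linarith; linarith]
    · by_cases hi2 : i = l
      · subst hi2; rw [hbl]; constructor <;> [linarith; linarith]
      · rw [hbo i hi2 hi]; exact hq i
  constructor
  · exact ent_lt n hn q _ l m hlm hq hqbar_mem
      (fun i h1 h2 => (hbo i h1 h2).symm)
      (by rw [hbl, hbm]; ring) (by rw [hbl, hbm]) hne
  · intro t ht hne2
    have hpl : q l + t * (if l = l then (1:ℝ) else if l = m then -1 else 0) = q l + t := by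
      simp
    have hpm : q m + t * (if m = l then (1:ℝ) else if m = m then -1 else 0) = q m - t := by
      simp [Ne.symm hlm]; ring
    refine ent_lt n hn _ _ l m hlm ht hqbar_mem ?_ ?_ (by rw [hbl, hbm]) ?_
    · intro i h1 h2
      simp only [h1, h2, if_false, mul_zero, add_zero]
      exact (hbo i h1 h2).symm
    · rw [hpl, hpm, hbl, hbm]; ring
    · rw [hpl, hpm]
      intro h
      apply hne2
      funext i
      by_cases h1 : i = m
      · subst h1
        rw [hbm, hpm]; linarith
      · by_cases h2 : i = l
        · subst h2
          rw [hbl, hpl]; linarith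
        · rw [hbo i h2 h1]
          simp only [h2, h1, if_false, mul_zero, add_zero]
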